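/- A compact subset A of ℝⁿ is disconnected if and only if there exist two finite unions U, V of open rational balls with A ⊆ U ∪ V, U ∩ V = ∅, A ∩ U ≠ ∅, and A ∩ V ≠ ∅. -/

import Mathlib

/-- A point of `ℝⁿ` all of whose coordinates are rational. -/
def IsRatPt {n : ℕ} (x : EuclideanSpace ℝ (Fin n)) : Prop := ∀ i, ∃ q : ℚ, x i = (q : ℝ)

/-- `U` is a finite union of open rational balls (rational centers and rational radii). -/
def IsFinRatBallUnion {n : ℕ} (U : Set (EuclideanSpace ℝ (Fin n))) : Prop :=
  ∃ (m : ℕ) (c : Fin m → EuclideanSpace ℝ (Fin n)) (r : Fin m → ℚ),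
    (∀ i, IsRatPt (c i)) ∧ U = ⋃ i, Metric.ball (c i) ((r i : ℝ))

lemma exists_ratPt_near {n : ℕ} (x : EuclideanSpace ℝ (Fin n)) {ε : ℝ} (hε : 0 < ε) :
    ∃ c : EuclideanSpace ℝ (Fin n), IsRatPt c ∧ dist c x < ε := by
  set δ : ℝ := ε / (2 * (n + 1)) with hδdef
  have hδ : 0 < δ := by positivity
  have hq : ∀ i : Fin n, ∃ q : ℚ, |x i - (q : ℝ)| < δ := fun i => exists_rat_near (x i) hδ
  choose q hq using hq
  refine ⟨WithLp.toLp 2 (fun i => (q i : ℝ)), fun i => ⟨q i, rfl⟩, ?_⟩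
  rw [EuclideanSpace.dist_eq]
  rw [show ε = √(ε ^ 2) from (Real.sqrt_sq hε.le).symm]
  apply Real.sqrt_lt_sqrt (by positivity)
  have h1 : ∀ i : Fin n, dist ((WithLp.toLp 2 (fun i => (q i : ℝ)) : EuclideanSpace ℝ (Fin n)) i) (x i) ^ 2 ≤ δ ^ 2 := by
    intro i
    have : dist ((q i : ℝ)) (x i) ≤ δ := by
      rw [Real.dist_eq, abs_sub_comm]; exact (hq i).le
    exact pow_le_pow_left₀ dist_nonneg this 2
  calc ∑ i, dist ((WithLp.toLp 2 (fun i => (q i : ℝ)) : EuclideanSpace ℝ (Fin n)) i) (x i) ^ 2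
      ≤ ∑ _i : Fin n, δ ^ 2 := Finset.sum_le_sum fun i _ => h1 i
    _ = (n : ℝ) * δ ^ 2 := by simp [mul_comm]
    _ < ε ^ 2 := by
        have hε2 : ε = 2 * (n + 1) * δ := by rw [hδdef]; field_simp
        rw [hε2]
        have hn : (n : ℝ) ≥ 0 := Nat.cast_nonneg n
        nlinarith [sq_nonneg δ, hδ]

lemma exists_finRatBallUnion_cover {n : ℕ} {K : Set (EuclideanSpace ℝ (Fin n))}
    (hK : IsCompact K) {δ : ℝ} (hδ : 0 < δ) :
    ∃ U, IsFinRatBallUnion U ∧ K ⊆ U ∧ U ⊆ Metric.thickening δ K := by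
  obtain ⟨r, hr1, hr2⟩ := exists_rat_btwn (show δ / 4 < δ / 2 by linarith)
  have hc : ∀ x : EuclideanSpace ℝ (Fin n), ∃ c, IsRatPt c ∧ dist c x < δ / 4 :=
    fun x => exists_ratPt_near x (by linarith)
  choose c hcrat hcd using hc
  have hcover : K ⊆ ⋃ x ∈ K, Metric.ball (c x) (r : ℝ) := by
    intro x hx
    refine Set.mem_biUnion hx ?_
    rw [Metric.mem_ball, dist_comm]
    exact (hcd x).trans hr1
  obtain ⟨t, htK, htfin, htcov⟩ := hK.elim_finite_subcover_image
    (fun x _ => Metric.isOpen_ball) hcover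
  haveI : Fintype ↥t := htfin.fintype
  set m := Fintype.card ↥t
  set e : ↥t ≃ Fin m := Fintype.equivFin ↥t
  refine ⟨⋃ x ∈ t, Metric.ball (c x) (r : ℝ),
    ⟨m, fun i => c ((e.symm i : ↥t) : EuclideanSpace ℝ (Fin n)), fun _ => r,
      fun i => hcrat _, ?_⟩, htcov, ?_⟩
  · rw [Set.biUnion_eq_iUnion]
    exact (e.symm.surjective.iUnion_comp
      (fun x : ↥t => Metric.ball (c (x : EuclideanSpace ℝ (Fin n))) (r : ℝ))).symm
  · rintro y hy
    simp only [Set.mem_iUnion] at hy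
    obtain ⟨x, hxt, hxy⟩ := hy
    rw [Metric.mem_thickening_iff]
    refine ⟨x, htK hxt, ?_⟩
    calc dist y x ≤ dist y (c x) + dist (c x) x := dist_triangle _ _ _
      _ < (r : ℝ) + δ / 4 := add_lt_add (Metric.mem_ball.mp hxy) (hcd x)
      _ < δ := by linarith

theorem stmt6 (n : ℕ) (A : Set (EuclideanSpace ℝ (Fin n))) (hA : IsCompact A) :
    ¬ IsPreconnected A ↔
      ∃ U V : Set (EuclideanSpace ℝ (Fin n)), IsFinRatBallUnion U ∧ IsFinRatBallUnion V ∧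
        A ⊆ U ∪ V ∧ U ∩ V = ∅ ∧ (A ∩ U).Nonempty ∧ (A ∩ V).Nonempty := by
  constructor
  · intro h
    rw [IsPreconnected] at h
    push_neg at h
    obtain ⟨u, v, hu, hv, hcov, hAu, hAv, hsep⟩ := h
    -- the two pieces
    set K₁ : Set (EuclideanSpace ℝ (Fin n)) := A \ v with hK₁def
    set K₂ : Set (EuclideanSpace ℝ (Fin n)) := A \ u with hK₂def
    have hK₁ : IsCompact K₁ := hA.inter_right hv.isClosed_compl
    have hK₂ : IsCompact K₂ := hA.inter_right hu.isClosed_compl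
    have hdisj : Disjoint K₁ K₂ := by
      rw [Set.disjoint_left]
      rintro x ⟨hxA, hxv⟩ ⟨-, hxu⟩
      rcases hcov hxA with h | h
      exacts [hxu h, hxv h]
    obtain ⟨δ, hδ, hth⟩ := hdisj.exists_thickenings hK₁ hK₂.isClosed
    obtain ⟨U, hUrat, hKU, hUth⟩ := exists_finRatBallUnion_cover hK₁ hδ
    obtain ⟨V, hVrat, hKV, hVth⟩ := exists_finRatBallUnion_cover hK₂ hδ
    refine ⟨U, V, hUrat, hVrat, ?_, ?_, ?_, ?_⟩
    · intro x hx
      by_cases hxv : x ∈ v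
      · have hxu : x ∉ u := fun hxu => by
          have : x ∈ A ∩ (u ∩ v) := ⟨hx, hxu, hxv⟩
          rw [hsep] at this; exact this
        exact Or.inr (hKV ⟨hx, hxu⟩)
      · exact Or.inl (hKU ⟨hx, hxv⟩)
    · rw [Set.eq_empty_iff_forall_notMem]
      rintro x ⟨hxU, hxV⟩
      exact (Set.disjoint_left.mp hth) (hUth hxU) (hVth hxV)
    · obtain ⟨x, hxA, hxu⟩ := hAu
      have hxK₁ : x ∈ K₁ := ⟨hxA, fun hxv => by
        have : x ∈ A ∩ (u ∩ v) := ⟨hxA, hxu, hxv⟩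
        rw [hsep] at this; exact this⟩
      exact ⟨x, hxA, hKU hxK₁⟩
    · obtain ⟨x, hxA, hxv⟩ := hAv
      have hxK₂ : x ∈ K₂ := ⟨hxA, fun hxu => by
        have : x ∈ A ∩ (u ∩ v) := ⟨hxA, hxu, hxv⟩
        rw [hsep] at this; exact this⟩
      exact ⟨x, hxA, hKV hxK₂⟩
  · rintro ⟨U, V, ⟨mU, cU, rU, -, hUeq⟩, ⟨mV, cV, rV, -, hVeq⟩, hcov, hdisj, hAU, hAV⟩ hconn
    have hUo : IsOpen U := hUeq ▸ isOpen_iUnion fun i => Metric.isOpen_ball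
    have hVo : IsOpen V := hVeq ▸ isOpen_iUnion fun i => Metric.isOpen_ball
    obtain ⟨x, -, hx⟩ := hconn U V hUo hVo hcov hAU hAV
    rw [hdisj] at hx
    exact hx
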